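/- Assume α₄ is rational. Then there exist a constant K > 0 and x₀ (depending on α₄) such that for all x ≥ x₀ and every prime p with x/2 < p ≤ x, one has ‖σ₄(p+1)/(p(p+1)) + σ₄(p+2)/(p(p+1)(p+2)) + σ₄(p+3)/(p(p+1)(p+2)(p+3))‖ ≤ K/x. -/

import Mathlib

open Finset

/-- `σ₄(n)`, the sum of the fourth powers of the divisors of `n`. -/
def sigma4 (n : ℕ) : ℕ := ∑ d ∈ n.divisors, d ^ 4

/-- `α₄ = ∑_{n ≥ 1} σ₄(n)/n!`. -/
noncomputable def alpha4 : ℝ := ∑' n : ℕ, (sigma4 (n + 1) : ℝ) / (Nat.factorial (n + 1) : ℝ)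

/-- The distance from a real number to the nearest integer. -/
noncomputable def distToInt (θ : ℝ) : ℝ := |θ - round θ|

noncomputable def g (n : ℕ) : ℝ := (sigma4 (n+1) : ℝ) / (Nat.factorial (n+1) : ℝ)

lemma sigma4_prime {p : ℕ} (hp : p.Prime) : sigma4 p = 1 + p^4 := by
  unfold sigma4
  rw [hp.divisors, Finset.sum_pair hp.one_lt.ne]
  norm_num

lemma sum_inv_pow4_le : ∀ n : ℕ, ∑ d ∈ Icc 1 (n+1), (1:ℝ)/(d:ℝ)^4 ≤ 2 - 1/(n+1) := by
  intro n
  induction n with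
  | zero => norm_num
  | succ n ih =>
    rw [Finset.sum_Icc_succ_top (by omega)]
    have h1 : (1:ℝ)/((n+2:ℕ):ℝ)^4 ≤ 1/(n+1) - 1/(n+2) := by
      push_cast
      rw [div_sub_div _ _ (by positivity) (by positivity)]
      rw [div_le_div_iff₀ (by positivity) (by positivity)]
      nlinarith [sq_nonneg ((n:ℝ)+1), Nat.cast_nonneg (α := ℝ) n, sq_nonneg (n:ℝ)]
    have h2 : ((n:ℝ)+1+1) = (n:ℝ)+2 := by ring
    push_cast at *
    rw [h2]
    linarith

lemma sigma4_le (n : ℕ) : (sigma4 n : ℝ) ≤ 2 * (n:ℝ)^4 := by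
  rcases Nat.eq_zero_or_pos n with h | h
  · subst h; simp [sigma4]
  have hrw : sigma4 n = ∑ d ∈ n.divisors, (n / d) ^ 4 := (Nat.sum_div_divisors n (· ^ 4)).symm
  rw [hrw]
  push_cast
  have h1 : ∑ d ∈ n.divisors, ((n / d : ℕ) : ℝ) ^ 4 ≤ ∑ d ∈ n.divisors, (n:ℝ)^4 * (1/(d:ℝ)^4) := by
    apply Finset.sum_le_sum
    intro d hd
    rw [Nat.mem_divisors] at hd
    have hd1 : 1 ≤ d := Nat.one_le_iff_ne_zero.2 (by rintro rfl; exact hd.2 (Nat.eq_zero_of_zero_dvd hd.1))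
    have : ((n / d : ℕ) : ℝ) ≤ (n:ℝ)/(d:ℝ) := Nat.cast_div_le
    calc ((n / d : ℕ) : ℝ) ^ 4 ≤ ((n:ℝ)/(d:ℝ))^4 := by
          apply pow_le_pow_left₀ (by positivity) this
      _ = (n:ℝ)^4 * (1/(d:ℝ)^4) := by rw [div_pow]; ring
  have h2 : ∑ d ∈ n.divisors, (n:ℝ)^4 * (1/(d:ℝ)^4) ≤ ∑ d ∈ Icc 1 n, (n:ℝ)^4 * (1/(d:ℝ)^4) := by
    apply Finset.sum_le_sum_of_subset_of_nonneg
    · intro d hd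
      rw [Nat.mem_divisors] at hd
      rw [Finset.mem_Icc]
      exact ⟨Nat.one_le_iff_ne_zero.2 (by rintro rfl; exact hd.2 (Nat.eq_zero_of_zero_dvd hd.1)),
        Nat.le_of_dvd h hd.1⟩
    · intros; positivity
  have h3 : ∑ d ∈ Icc 1 n, (n:ℝ)^4 * (1/(d:ℝ)^4) = (n:ℝ)^4 * ∑ d ∈ Icc 1 n, (1:ℝ)/(d:ℝ)^4 := by
    rw [Finset.mul_sum]
  obtain ⟨n', rfl⟩ := Nat.exists_eq_succ_of_ne_zero (Nat.pos_iff_ne_zero.1 h)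
  have h6 : ∑ d ∈ Icc 1 (n'+1), (1:ℝ)/(d:ℝ)^4 ≤ 2 := by
    refine le_trans (sum_inv_pow4_le n') ?_
    have : (0:ℝ) ≤ 1/((n':ℝ)+1) := by positivity
    linarith
  have h5 : (0:ℝ) ≤ ((n'+1 : ℕ):ℝ)^4 := by positivity
  calc ∑ d ∈ (n'+1).divisors, ((((n'+1)/d : ℕ)):ℝ)^4 ≤ _ := h1
    _ ≤ _ := h2
    _ = _ := h3
    _ ≤ ((n'+1:ℕ):ℝ)^4 * 2 := by
        apply mul_le_mul_of_nonneg_left _ h5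
        push_cast at h6 ⊢; exact h6
    _ = 2 * ((Nat.succ n' : ℕ):ℝ)^4 := by push_cast; ring

lemma two_pow_le_factorial : ∀ n : ℕ, 2^n ≤ Nat.factorial (n+1) := by
  intro n
  induction n with
  | zero => norm_num
  | succ n ih =>
    calc 2^(n+1) = 2 * 2^n := by ring
      _ ≤ 2 * Nat.factorial (n+1) := by omega
      _ ≤ (n+2) * Nat.factorial (n+1) := by
          apply Nat.mul_le_mul_right; omega
      _ = Nat.factorial (n+2) := (Nat.factorial_succ (n+1)).symm

lemma summable_g : Summable g := by
  have hb : Summable (fun n : ℕ => 4 * (((n+1):ℝ)^4 * (1/2:ℝ)^(n+1))) := by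
    apply Summable.mul_left
    exact ((summable_nat_add_iff 1).2 (summable_pow_mul_geometric_of_norm_lt_one 4
      (r := (1/2:ℝ)) (by rw [Real.norm_eq_abs, abs_of_pos] <;> norm_num))).congr (by intro n; push_cast; ring)
  apply Summable.of_nonneg_of_le _ _ hb
  · intro n; unfold g; positivity
  · intro n
    unfold g
    have h1 : (sigma4 (n+1) : ℝ) ≤ 2 * ((n+1):ℝ)^4 := by
      have := sigma4_le (n+1); push_cast at this ⊢; linarith
    have h2 : (2:ℝ)^n ≤ (Nat.factorial (n+1) : ℝ) := by
      exact_mod_cast two_pow_le_factorial n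
    have h3 : (0:ℝ) < (Nat.factorial (n+1) : ℝ) := by
      exact_mod_cast Nat.factorial_pos (n+1)
    rw [div_le_iff₀ h3]
    calc (sigma4 (n+1) : ℝ) ≤ 2 * ((n+1):ℝ)^4 := h1
      _ = 4 * (((n+1):ℝ)^4 * (1/2:ℝ)^(n+1)) * 2^n := by
          have key : (1/2:ℝ)^(n+1) * 2^n = 1/2 := by
            calc (1/2:ℝ)^(n+1)*2^n = ((1/2:ℝ)*2)^n * (1/2) := by rw [mul_pow]; ring
              _ = 1/2 := by norm_num
          rw [show (4:ℝ)*((((n:ℝ)+1))^4 * (1/2:ℝ)^(n+1))*2^n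
              = 4*(((n:ℝ)+1))^4*((1/2:ℝ)^(n+1)*2^n) from by ring, key]
          ring
      _ ≤ 4 * (((n+1):ℝ)^4 * (1/2:ℝ)^(n+1)) * (Nat.factorial (n+1) : ℝ) := by
          apply mul_le_mul_of_nonneg_left h2; positivity

lemma fact_ineq : ∀ (k m : ℕ), Nat.factorial m * ((m+1) * (2^k * ((m+2+k)*(m+3+k)*(m+4+k)*(m+5+k)))) ≤ Nat.factorial (m+5+k) := by
  intro k
  induction k with
  | zero =>
    intro m
    have : Nat.factorial (m+5) = (m+5)*((m+4)*((m+3)*((m+2)*((m+1)*Nat.factorial m)))) := by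
      simp [Nat.factorial_succ]
    rw [this]; ring_nf; omega
  | succ k ih =>
    intro m
    have h1 : Nat.factorial (m+5+(k+1)) = (m+6+k) * Nat.factorial (m+5+k) := by
      have : m+5+(k+1) = (m+5+k)+1 := by omega
      rw [this, Nat.factorial_succ]; ring_nf
    rw [h1]
    have h2 := ih m
    calc Nat.factorial m * ((m+1) * (2^(k+1) * ((m+2+(k+1))*(m+3+(k+1))*(m+4+(k+1))*(m+5+(k+1)))))
        = 2 * (m+3+k)*(m+4+k)*(m+5+k)*(m+6+k) * (Nat.factorial m * ((m+1) * 2^k)) := by ring_nf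
      _ ≤ (m+6+k) * ((m+2+k)*(m+3+k)*(m+4+k)*(m+5+k)) * (Nat.factorial m * ((m+1) * 2^k)) := by
          apply Nat.mul_le_mul_right
          have : 2 ≤ m+2+k := by omega
          calc 2 * (m+3+k)*(m+4+k)*(m+5+k)*(m+6+k)
              = (m+6+k) * (2*((m+3+k)*(m+4+k)*(m+5+k))) := by ring
            _ ≤ (m+6+k) * ((m+2+k)*((m+3+k)*(m+4+k)*(m+5+k))) := by
                apply Nat.mul_le_mul_left
                apply Nat.mul_le_mul_right
                omega
            _ = (m+6+k) * ((m+2+k)*(m+3+k)*(m+4+k)*(m+5+k)) := by ring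
      _ = (m+6+k) * (Nat.factorial m * ((m+1) * (2^k * ((m+2+k)*(m+3+k)*(m+4+k)*(m+5+k))))) := by ring
      _ ≤ (m+6+k) * Nat.factorial (m+5+k) := Nat.mul_le_mul_left _ h2

lemma tail_term_le (m k : ℕ) (hm : 1 ≤ m) :
    (Nat.factorial m : ℝ) * g (k + (m+4)) ≤ 32/((m:ℝ)+1) * (1/2:ℝ)^k := by
  have hidx : k + (m+4) + 1 = m+5+k := by omega
  unfold g
  rw [hidx]
  set D : ℝ := (Nat.factorial (m+5+k) : ℝ) with hD
  have hDpos : 0 < D := by rw [hD]; exact_mod_cast Nat.factorial_pos _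
  have hMpos : (0:ℝ) < (Nat.factorial m : ℝ) := by exact_mod_cast Nat.factorial_pos _
  have h2k : (0:ℝ) < (2:ℝ)^k := by positivity
  have hm1 : (0:ℝ) < (m:ℝ)+1 := by positivity
  have hf : (Nat.factorial m : ℝ) * (((m:ℝ)+1) * ((2:ℝ)^k *
      (((m:ℝ)+2+k)*((m:ℝ)+3+k)*((m:ℝ)+4+k)*((m:ℝ)+5+k)))) ≤ D := by
    rw [hD]
    exact_mod_cast fact_ineq k m
  have hσ : (sigma4 (m+5+k) : ℝ) ≤ 2 * ((m:ℝ)+5+k)^4 := by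
    have := sigma4_le (m+5+k); push_cast at this ⊢; linarith
  have hσ0 : (0:ℝ) ≤ (sigma4 (m+5+k) : ℝ) := Nat.cast_nonneg _
  -- product of four factors ≥ ((m+5+k)/2)^4
  have hm' : (1:ℝ) ≤ (m:ℝ) := by exact_mod_cast hm
  have ha : ((m:ℝ)+5+k)/2 ≤ (m:ℝ)+2+k := by
    have : (0:ℝ) ≤ (k:ℝ) := Nat.cast_nonneg _
    linarith
  have hb : ((m:ℝ)+5+k)/2 ≤ (m:ℝ)+3+k := by linarith
  have hc : ((m:ℝ)+5+k)/2 ≤ (m:ℝ)+4+k := by linarith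
  have hd2 : ((m:ℝ)+5+k)/2 ≤ (m:ℝ)+5+k := by
    have : (0:ℝ) ≤ (k:ℝ) := Nat.cast_nonneg _
    linarith
  have hapos : (0:ℝ) ≤ ((m:ℝ)+5+k)/2 := by positivity
  have hprod : (((m:ℝ)+5+k)/2)^4 ≤ ((m:ℝ)+2+k)*((m:ℝ)+3+k)*((m:ℝ)+4+k)*((m:ℝ)+5+k) := by
    calc (((m:ℝ)+5+k)/2)^4 = (((m:ℝ)+5+k)/2)*(((m:ℝ)+5+k)/2)*(((m:ℝ)+5+k)/2)*(((m:ℝ)+5+k)/2) := by ring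
      _ ≤ _ := by gcongr
  have key : (Nat.factorial m : ℝ) * (sigma4 (m+5+k) : ℝ) * (((m:ℝ)+1) * (2:ℝ)^k) ≤ 32 * D := by
    calc (Nat.factorial m : ℝ) * (sigma4 (m+5+k) : ℝ) * (((m:ℝ)+1) * (2:ℝ)^k)
        ≤ (Nat.factorial m : ℝ) * (2 * ((m:ℝ)+5+k)^4) * (((m:ℝ)+1) * (2:ℝ)^k) := by
          apply mul_le_mul_of_nonneg_right _ (by positivity)
          exact mul_le_mul_of_nonneg_left hσ (le_of_lt hMpos)
      _ = 32 * ((Nat.factorial m : ℝ) * (((m:ℝ)+1) * ((2:ℝ)^k * ((((m:ℝ)+5+k)/2)^4)))) := by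
          ring
      _ ≤ 32 * ((Nat.factorial m : ℝ) * (((m:ℝ)+1) * ((2:ℝ)^k *
            (((m:ℝ)+2+k)*((m:ℝ)+3+k)*((m:ℝ)+4+k)*((m:ℝ)+5+k))))) := by
          gcongr
      _ ≤ 32 * D := by linarith
  have step : (Nat.factorial m : ℝ) * ((sigma4 (m+5+k) : ℝ) / D) ≤ 32/(((m:ℝ)+1) * (2:ℝ)^k) := by
    rw [mul_div_assoc', div_le_div_iff₀ hDpos (by positivity)]
    linarith [key]
  calc (Nat.factorial m : ℝ) * ((sigma4 (m+5+k) : ℝ) / D) ≤ 32/(((m:ℝ)+1) * (2:ℝ)^k) := step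
    _ = 32/((m:ℝ)+1) * (1/2:ℝ)^k := by
        rw [one_div, inv_pow, div_mul_eq_div_div]
        rw [div_eq_mul_inv (32/((m:ℝ)+1))]

set_option maxHeartbeats 2000000 in
theorem near_integrality_of_three_terms (hrat : ¬ Irrational alpha4) :
    ∃ K : ℝ, 0 < K ∧ ∃ x₀ : ℝ, ∀ x : ℝ, x₀ ≤ x →
    ∀ p : ℕ, p.Prime → x / 2 < (p : ℝ) → (p : ℝ) ≤ x →
    distToInt ((sigma4 (p + 1) : ℝ) / ((p : ℝ) * ((p : ℝ) + 1))
        + (sigma4 (p + 2) : ℝ) / ((p : ℝ) * ((p : ℝ) + 1) * ((p : ℝ) + 2))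
        + (sigma4 (p + 3) : ℝ) /
            ((p : ℝ) * ((p : ℝ) + 1) * ((p : ℝ) + 2) * ((p : ℝ) + 3)))
      ≤ K / x := by
  obtain ⟨q, hq⟩ : ∃ q : ℚ, (q:ℝ) = alpha4 := not_not.mp hrat
  refine ⟨130, by norm_num, 2*q.den + 206, ?_⟩
  intro x hx p hp hp1 hp2
  have hx0 : (0:ℝ) < x := lt_of_lt_of_le (by positivity) hx
  have hpd : ((q.den : ℝ) + 103) < (p:ℝ) := by push_cast at hx hp1 ⊢; linarith
  have hpd' : q.den + 104 ≤ p := by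
    have : ((q.den + 103 : ℕ) : ℝ) < (p:ℝ) := by push_cast; linarith
    have := Nat.cast_lt.mp this
    omega
  obtain ⟨m, rfl⟩ : ∃ m, p = m + 1 := ⟨p-1, by omega⟩
  have hm1 : 1 ≤ m := by omega
  have hden : q.den ≤ m := by omega
  set M : ℝ := (Nat.factorial m : ℝ) with hM
  have hMpos : (0:ℝ) < M := by rw [hM]; exact_mod_cast Nat.factorial_pos m
  have hMne : M ≠ 0 := ne_of_gt hMpos
  -- splitting of the series
  have hsum : ∑ n ∈ range (m+4), g n + ∑' k, g (k + (m+4)) = alpha4 :=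
    Summable.sum_add_tsum_nat_add (m+4) summable_g
  have hsum4 : ∑ n ∈ range (m+4), g n
      = ∑ n ∈ range m, g n + g m + g (m+1) + g (m+2) + g (m+3) := by
    rw [show m+4 = (m+3)+1 from rfl, Finset.sum_range_succ,
        show m+3 = (m+2)+1 from rfl, Finset.sum_range_succ,
        show m+2 = (m+1)+1 from rfl, Finset.sum_range_succ, Finset.sum_range_succ]
  -- the integer partial sum
  set A : ℕ := ∑ n ∈ range m, sigma4 (n+1) * (Nat.factorial m / Nat.factorial (n+1)) with hAdef
  have hA : (A:ℝ) = M * ∑ n ∈ range m, g n := by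
    rw [hAdef, Finset.mul_sum]
    push_cast
    apply Finset.sum_congr rfl
    intro n hn
    have hn' : n+1 ≤ m := by
      have := Finset.mem_range.mp hn; omega
    rw [Nat.cast_div (Nat.factorial_dvd_factorial hn')
      (Nat.cast_ne_zero.2 (Nat.factorial_ne_zero _))]
    unfold g
    ring
  -- m! * alpha4 is of integral form
  set B : ℕ := Nat.factorial m / q.den with hBdef
  have hz1 : ((B : ℕ):ℝ) * (q.num:ℝ) = M * alpha4 := by
    rw [hBdef]
    rw [← hq, Rat.cast_def,
      Nat.cast_div (Nat.dvd_factorial q.pos hden) (Nat.cast_ne_zero.2 (Rat.den_nz q))]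
    ring
  -- the term g m
  have hgm : M * g m = ((m:ℝ)+1)^3 + 1/((m:ℝ)+1) := by
    unfold g
    rw [sigma4_prime hp, Nat.factorial_succ]
    push_cast
    have h1 : ((m:ℝ)+1) ≠ 0 := by positivity
    field_simp
    ring
  -- the tail R
  set R : ℝ := M * ∑' k, g (k + (m+4)) with hRdef
  have hgnonneg : ∀ n, 0 ≤ g n := by
    intro n; unfold g; positivity
  have hR0 : 0 ≤ R := by
    rw [hRdef]
    apply mul_nonneg (le_of_lt hMpos)
    exact tsum_nonneg (fun k => hgnonneg _)
  have hs1 : Summable (fun k => M * g (k + (m+4))) :=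
    ((summable_nat_add_iff (m+4)).2 summable_g).mul_left M
  have hs2 : Summable (fun k : ℕ => 32/((m:ℝ)+1) * (1/2:ℝ)^k) :=
    (summable_geometric_of_lt_one (by norm_num) (by norm_num)).mul_left _
  have hRle : R ≤ 64/((m:ℝ)+1) := by
    rw [hRdef, ← tsum_mul_left]
    calc ∑' k, M * g (k + (m+4)) ≤ ∑' k : ℕ, 32/((m:ℝ)+1) * (1/2:ℝ)^k :=
          Summable.tsum_le_tsum (fun k => tail_term_le m k hm1) hs1 hs2
      _ = 32/((m:ℝ)+1) * (1 - 1/2)⁻¹ := by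
          rw [tsum_mul_left, tsum_geometric_of_lt_one (by norm_num) (by norm_num)]
      _ = 64/((m:ℝ)+1) := by norm_num; ring
  -- factorial expansions
  have hf2 : (Nat.factorial (m+2) : ℝ) = ((m:ℝ)+2)*((m:ℝ)+1)*M := by
    rw [Nat.factorial_succ, Nat.factorial_succ]; push_cast; ring
  have hf3 : (Nat.factorial (m+3) : ℝ) = ((m:ℝ)+3)*((m:ℝ)+2)*((m:ℝ)+1)*M := by
    rw [Nat.factorial_succ, Nat.factorial_succ, Nat.factorial_succ]; push_cast; ring
  have hf4 : (Nat.factorial (m+4) : ℝ) = ((m:ℝ)+4)*((m:ℝ)+3)*((m:ℝ)+2)*((m:ℝ)+1)*M := by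
    rw [Nat.factorial_succ, Nat.factorial_succ, Nat.factorial_succ, Nat.factorial_succ]
    push_cast; ring
  -- the expression E
  set E : ℝ := (sigma4 (m + 1 + 1) : ℝ) / ((m+1 : ℕ) * ((m+1 : ℕ) + 1))
        + (sigma4 (m + 1 + 2) : ℝ) / ((m+1 : ℕ) * ((m+1 : ℕ) + 1) * ((m+1 : ℕ) + 2))
        + (sigma4 (m + 1 + 3) : ℝ) /
            ((m+1 : ℕ) * ((m+1 : ℕ) + 1) * ((m+1 : ℕ) + 2) * ((m+1 : ℕ) + 3)) with hEdef
  have hE : E = M * g (m+1) + M * g (m+2) + M * g (m+3) := by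
    rw [hEdef]
    unfold g
    rw [show m+1+1 = m+2 from rfl, show m+2+1 = m+3 from rfl, show m+3+1 = m+4 from rfl,
      show m+1+2 = m+3 from rfl, show m+1+3 = m+4 from rfl]
    rw [hf2, hf3, hf4]
    have h1 : ((m:ℝ)+1) ≠ 0 := by positivity
    have h2 : ((m:ℝ)+2) ≠ 0 := by positivity
    have h3 : ((m:ℝ)+3) ≠ 0 := by positivity
    have h4 : ((m:ℝ)+4) ≠ 0 := by positivity
    push_cast
    field_simp
    ring
  -- the integer z
  set z : ℤ := (B:ℤ) * q.num - (A:ℤ) - ((m:ℤ)+1)^3 with hzdef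
  have hzE : E = (z:ℝ) - (1/((m:ℝ)+1) + R) := by
    have hmain : M * alpha4 = (A:ℝ) + (((m:ℝ)+1)^3 + 1/((m:ℝ)+1)) + E + R := by
      rw [← hsum, hsum4, hE]
      rw [mul_add, mul_add, mul_add, mul_add, mul_add, ← hA, hgm, ← hRdef]
      ring
    have hcast : (z:ℝ) = ((B : ℕ):ℝ) * (q.num:ℝ) - (A:ℝ) - ((m:ℝ)+1)^3 := by
      rw [hzdef]; push_cast; ring
    rw [hcast]
    rw [← hz1] at hmain
    linarith [hmain]
  -- conclude
  have hdist : distToInt E ≤ |E - (z:ℝ)| := round_le E z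
  have h65 : distToInt E ≤ 65/((m:ℝ)+1) := by
    rw [hzE] at hdist ⊢
    have : |(z:ℝ) - (1/((m:ℝ)+1) + R) - (z:ℝ)| = 1/((m:ℝ)+1) + R := by
      rw [show (z:ℝ) - (1/((m:ℝ)+1) + R) - (z:ℝ) = -(1/((m:ℝ)+1) + R) from by ring, abs_neg,
        abs_of_nonneg (by positivity)]
    rw [this] at hdist
    have h1 : (0:ℝ) < (m:ℝ)+1 := by positivity
    have : 1/((m:ℝ)+1) + R ≤ 65/((m:ℝ)+1) := by
      have : 1/((m:ℝ)+1) + 64/((m:ℝ)+1) = 65/((m:ℝ)+1) := by ring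
      linarith
    linarith
  refine le_trans h65 ?_
  rw [div_le_div_iff₀ (by positivity) hx0]
  have hxp : x < 2*((m:ℝ)+1) := by
    push_cast at hp1 ⊢
    linarith
  nlinarith
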